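/- Let τ > 0, let ν be a finite signed Borel measure on [-τ,0], let r be the differential resolvent of ν, extended by r(t) = 0 for t < 0, and assume r ∈ L¹(0,∞). Let f : [0,∞) → ℝ be continuous and suppose that for every δ ∈ (0,1], ∫_t^{t+δ} f(s) ds → 0 as t → ∞. Then (r ∗ f)(t) = ∫_0^t r(t-s) f(s) ds → 0 as t → ∞; that is, the solution of the forced delay equation x₁'(t) = ∫_{[-τ,0]} x₁(t+u) dν(u) + f(t) with zero initial function tends to zero at infinity. -/

import Mathlib

open MeasureTheory Filter Set

/-- Integral of a real function against a finite signed Borel measure, defined through the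
Jordan decomposition. -/
noncomputable def sInt (μ : MeasureTheory.SignedMeasure ℝ) (f : ℝ → ℝ) : ℝ :=
  (∫ s, f s ∂μ.toJordanDecomposition.posPart) - (∫ s, f s ∂μ.toJordanDecomposition.negPart)

/-- `r` is the differential resolvent of the finite signed measure `ν` on `[-τ,0]`:
it vanishes on `(-∞,0)`, is continuous on `[0,∞)`, and satisfies
`r(t) = 1 + ∫_0^t ∫_{[-τ,0]} r(s+u) dν(u) ds` for `t ≥ 0` (the extension of `r` by zero on
the negative half-line makes the inner integral equal to the one over `[max(-τ,-s),0]`). -/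
def IsResolvent (ν : MeasureTheory.SignedMeasure ℝ) (r : ℝ → ℝ) : Prop :=
  (∀ t < (0:ℝ), r t = 0) ∧ ContinuousOn r (Set.Ici (0:ℝ)) ∧
    ∀ t ≥ (0:ℝ), r t = 1 + ∫ s in (0:ℝ)..t, sInt ν (fun u => r (s + u))

/-- If the differential resolvent `r` of `ν` is integrable on `(0,∞)` and the sectional
averages `∫_t^{t+δ} f(s) ds` tend to zero for every `δ ∈ (0,1]`, then the solution
`(r ∗ f)(t) = ∫_0^t r(t-s) f(s) ds` of the forced delay equation with zero initial function
tends to zero as `t → ∞`. -/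

lemma unif_bound (F : ℝ → ℝ) (hF : Continuous F)
    (h : ∀ δ ∈ Set.Ioc (0:ℝ) 1, Tendsto (fun t => F (t+δ) - F t) atTop (nhds 0)) :
    ∃ C : ℝ, 0 ≤ C ∧ ∀ t : ℝ, 0 ≤ t → ∀ v ∈ Set.Icc (0:ℝ) 1, |F (t+v) - F t| ≤ C := by
  classical
  haveI : CompleteSpace (Set.Icc (0:ℝ) 1) := IsClosed.completeSpace_coe (hs := isClosed_Icc)
  set S : ℕ → Set (Set.Icc (0:ℝ) 1) :=
    fun N => {v | ∀ t : ℝ, (N:ℝ) ≤ t → |F (t + ↑v) - F t| ≤ 1} with hS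
  have hclosed : ∀ N, IsClosed (S N) := by
    intro N
    have : S N = ⋂ (t : ℝ) (_ : (N:ℝ) ≤ t),
        {v : Set.Icc (0:ℝ) 1 | |F (t + ↑v) - F t| ≤ 1} := by
      ext v; simp [hS, Set.mem_iInter]
    rw [this]
    exact isClosed_iInter fun t => isClosed_iInter fun ht =>
      isClosed_le (((hF.comp (continuous_const.add continuous_subtype_val)).sub
        continuous_const).abs) continuous_const
  have hcover : (⋃ N, S N) = univ := by
    ext v
    simp only [Set.mem_iUnion, Set.mem_univ, iff_true]
    rcases eq_or_lt_of_le v.2.1 with h0 | h0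
    · exact ⟨0, fun t _ => by simp [← h0]⟩
    · have := (h v.1 ⟨h0, v.2.2⟩)
      have h1 : ∀ᶠ t in atTop, |F (t + ↑v) - F t| ≤ 1 := by
        filter_upwards [Metric.tendsto_nhds.mp this 1 one_pos] with t ht
        rw [Real.dist_eq, sub_zero] at ht
        exact ht.le
      rcases eventually_atTop.mp h1 with ⟨a, ha⟩
      exact ⟨⌈a⌉₊, fun t ht => ha t (le_trans (Nat.le_ceil a) ht)⟩
  obtain ⟨N, v₀, hv₀⟩ := nonempty_interior_of_iUnion_of_closed hclosed hcover
  rw [mem_interior_iff_mem_nhds, Metric.mem_nhds_iff] at hv₀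
  obtain ⟨ε, hε, hball⟩ := hv₀
  -- interval [a,b] of good widths
  set a := max (↑v₀ - ε/2) 0 with ha
  set b := min (↑v₀ + ε/2) 1 with hb
  have hv01 : (0:ℝ) ≤ ↑v₀ := v₀.2.1
  have hv02 : (↑v₀:ℝ) ≤ 1 := v₀.2.2
  have hab : a < b := by
    rw [ha, hb]
    rcases max_cases (↑v₀ - ε/2) (0:ℝ) with ⟨h1, h2⟩ | ⟨h1, h2⟩ <;>
      rcases min_cases (↑v₀ + ε/2) (1:ℝ) with ⟨h3, h4⟩ | ⟨h3, h4⟩ <;> rw [h1, h3] <;> linarith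
  have ha0 : 0 ≤ a := le_max_right _ _
  have hb1 : b ≤ 1 := min_le_right _ _
  have good1 : ∀ v, a ≤ v → v ≤ b → ∀ t : ℝ, (N:ℝ) ≤ t → |F (t + v) - F t| ≤ 1 := by
    intro v h1 h2
    have hv : v ∈ Set.Icc (0:ℝ) 1 := ⟨le_trans ha0 h1, le_trans h2 hb1⟩
    have hd : dist (⟨v, hv⟩ : Set.Icc (0:ℝ) 1) v₀ < ε := by
      rw [Subtype.dist_eq, Real.dist_eq]
      have h3 : v ≥ ↑v₀ - ε/2 := le_trans (le_max_left _ _) h1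
      have h4 : v ≤ ↑v₀ + ε/2 := le_trans h2 (min_le_left _ _)
      have : |v - (v₀:ℝ)| < ε := abs_lt.mpr ⟨by linarith, by linarith⟩
      simpa using this
    exact hball hd
  set Q : ℝ → ℝ → Prop := fun c v => ∀ t : ℝ, (N:ℝ) ≤ t → |F (t + v) - F t| ≤ c with hQ
  have qadd : ∀ c d v w, Q c v → Q d w → 0 ≤ v → Q (c + d) (v + w) := by
    intro c d v w hc hd hv0 t ht
    have h1 : |F (t + v) - F t| ≤ c := hc t ht
    have h2 : |F ((t + v) + w) - F (t + v)| ≤ d := hd (t + v) (by linarith)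
    calc |F (t + (v + w)) - F t|
        = |(F ((t+v)+w) - F (t+v)) + (F (t+v) - F t)| := by ring_nf
      _ ≤ |F ((t+v)+w) - F (t+v)| + |F (t+v) - F t| := abs_add_le _ _
      _ ≤ c + d := by linarith
  have qsub : ∀ c d v w, Q c v → Q d w → v ≤ w → Q (c + d) (w - v) := by
    intro c d v w hc hd hvw t ht
    have h1 : |F (t + w) - F t| ≤ d := hd t ht
    have h2 : |F ((t + (w - v)) + v) - F (t + (w - v))| ≤ c := hc (t + (w-v)) (by linarith)
    have h3 : (t + (w - v)) + v = t + w := by ring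
    rw [h3] at h2
    calc |F (t + (w - v)) - F t|
        = |(F (t + w) - F t) - (F (t + w) - F (t + (w-v)))| := by ring_nf
      _ ≤ |F (t + w) - F t| + |F (t + w) - F (t + (w-v))| := abs_sub _ _
      _ ≤ c + d := by linarith
  set η := b - a with hη
  have hηpos : 0 < η := by simp [hη]; linarith
  have step1 : ∀ v, 0 ≤ v → v ≤ η → Q 2 v := by
    intro v h1 h2
    have hQ1 : Q 1 a := good1 a le_rfl hab.le
    have hQ2 : Q 1 (a + v) := good1 (a + v) (by linarith) (by simp [hη] at h2 ⊢; linarith)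
    have h := qsub 1 1 a (a + v) hQ1 hQ2 (by linarith)
    have he : (a + v) - a = v := by ring
    rw [he] at h
    intro t ht
    have := h t ht
    linarith
  have stepk : ∀ k : ℕ, ∀ v, 0 ≤ v → v ≤ (k:ℝ) * η → Q (2 * (k:ℝ)) v := by
    intro k
    induction k with
    | zero =>
        intro v h1 h2
        have : v = 0 := le_antisymm (by simpa using h2) h1
        subst this; intro t ht; simp
    | succ k ih =>
        intro v h1 h2
        push_cast at h2 ⊢
        rcases le_or_gt v η with h3 | h3
        · intro t ht
          have := step1 v h1 h3 t ht
          have hk : (0:ℝ) ≤ (k:ℝ) := Nat.cast_nonneg k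
          linarith
        · have h4 : v - η ≤ (k:ℝ) * η := by linarith
          have h := qadd (2*(k:ℝ)) 2 (v - η) η (ih (v - η) (by linarith) h4)
            (step1 η hηpos.le le_rfl) (by linarith)
          have he : (v - η) + η = v := by ring
          rw [he] at h
          intro t ht
          have := h t ht
          linarith
  set k₀ := ⌈1/η⌉₊ with hk₀
  have hk₀η : 1 ≤ (k₀:ℝ) * η := by
    have h := Nat.le_ceil (1/η)
    calc (1:ℝ) = (1/η) * η := by field_simp
      _ ≤ (k₀:ℝ) * η := by apply mul_le_mul_of_nonneg_right; exact_mod_cast h; linarith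
  obtain ⟨Mc, hMc⟩ := (isCompact_Icc (a := (0:ℝ)) (b := (N:ℝ)+1)).exists_bound_of_continuousOn
    hF.continuousOn
  refine ⟨max (2*k₀) (2*Mc), le_trans (by positivity) (le_max_left _ _), fun t ht v hv => ?_⟩
  rcases le_or_gt (N:ℝ) t with hN | hN
  · calc |F (t+v) - F t| ≤ 2*(k₀:ℝ) := stepk k₀ v hv.1 (le_trans hv.2 hk₀η) t hN
      _ ≤ _ := by exact_mod_cast le_max_left _ _
  · have h1 : t ∈ Set.Icc (0:ℝ) ((N:ℝ)+1) := ⟨ht, by linarith⟩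
    have h2 : t + v ∈ Set.Icc (0:ℝ) ((N:ℝ)+1) := ⟨by linarith [hv.1], by linarith [hv.2]⟩
    calc |F (t+v) - F t| ≤ |F (t+v)| + |F t| := abs_sub _ _
      _ ≤ Mc + Mc := add_le_add (hMc _ h2) (hMc _ h1)
      _ ≤ _ := le_trans (by linarith) (le_max_right _ _)

lemma tendsto_zero_of_L1_lip (r : ℝ → ℝ) (L : ℝ) (hL : 0 < L)
    (hr1 : IntegrableOn r (Set.Ioi (0:ℝ)))
    (hlip : ∀ a b : ℝ, 0 ≤ a → a ≤ b → |r b - r a| ≤ L * (b - a)) :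
    Tendsto r atTop (nhds 0) := by
  rw [NormedAddCommGroup.tendsto_nhds_zero]
  intro ε hε
  set w := min 1 (ε / (2 * L)) with hw
  have hw0 : 0 < w := lt_min one_pos (by positivity)
  have hIoi : Tendsto (fun t : ℝ => ∫ s in (0:ℝ)..t, |r s|) atTop
      (nhds (∫ s in Set.Ioi (0:ℝ), |r s|)) :=
    MeasureTheory.intervalIntegral_tendsto_integral_Ioi 0 hr1.norm tendsto_id
  have hIoi2 : Tendsto (fun t : ℝ => ∫ s in (0:ℝ)..(t+w), |r s|) atTop
      (nhds (∫ s in Set.Ioi (0:ℝ), |r s|)) :=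
    MeasureTheory.intervalIntegral_tendsto_integral_Ioi 0 hr1.norm
      (tendsto_atTop_add_const_right _ w tendsto_id)
  have htail : Tendsto (fun t : ℝ => ∫ s in t..(t+w), |r s|) atTop (nhds 0) := by
    have h := hIoi2.sub hIoi
    rw [sub_self] at h
    apply h.congr'
    filter_upwards [eventually_ge_atTop (0:ℝ)] with t ht
    have h1 : IntervalIntegrable (fun s => |r s|) volume 0 t := by
      rw [intervalIntegrable_iff_integrableOn_Ioc_of_le ht]
      exact MeasureTheory.IntegrableOn.mono_set hr1.norm Set.Ioc_subset_Ioi_self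
    have h2 : IntervalIntegrable (fun s => |r s|) volume 0 (t+w) := by
      rw [intervalIntegrable_iff_integrableOn_Ioc_of_le (by linarith)]
      exact MeasureTheory.IntegrableOn.mono_set hr1.norm Set.Ioc_subset_Ioi_self
    exact (intervalIntegral.integral_interval_sub_left h2 h1)
  have hsmall : ∀ᶠ t in atTop, ∫ s in t..(t+w), |r s| < w * ε / 4 := by
    filter_upwards [Metric.tendsto_nhds.mp htail (w * ε / 4) (by positivity)] with t ht
    rw [Real.dist_eq, sub_zero] at ht
    exact lt_of_le_of_lt (le_abs_self _) ht
  filter_upwards [hsmall, eventually_ge_atTop (0:ℝ)] with t ht ht0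
  -- w * |r t| ≤ ∫_t^{t+w} |r| + L w^2 / 2
  have key : w * |r t| - L * w^2 / 2 ≤ ∫ s in t..(t+w), |r s| := by
    have hmono : ∀ s ∈ Set.Icc t (t+w), |r t| - L * (s - t) ≤ |r s| := by
      intro s hs
      have := hlip t s ht0 hs.1
      have h1 : |r t| - |r s| ≤ |r t - r s| := abs_sub_abs_le_abs_sub _ _
      rw [abs_sub_comm] at h1
      linarith
    have hint1 : IntervalIntegrable (fun s => |r t| - L * (s - t)) volume t (t+w) :=
      Continuous.intervalIntegrable (by fun_prop) _ _
    have hint2 : IntervalIntegrable (fun s => |r s|) volume t (t+w) := by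
      rw [intervalIntegrable_iff_integrableOn_Ioc_of_le (by linarith)]
      exact MeasureTheory.IntegrableOn.mono_set hr1.norm (fun x hx => lt_of_lt_of_le (lt_of_le_of_lt ht0 hx.1) le_rfl)
    have := intervalIntegral.integral_mono_on (by linarith) hint1 hint2 hmono
    have hcalc : ∫ s in t..(t+w), (|r t| - L * (s - t)) = w * |r t| - L * w^2 / 2 := by
      have c1 : IntervalIntegrable (fun _ : ℝ => |r t|) volume t (t+w) :=
        intervalIntegrable_const
      have c2 : IntervalIntegrable (fun s : ℝ => L * (s - t)) volume t (t+w) :=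
        Continuous.intervalIntegrable (by fun_prop) _ _
      rw [intervalIntegral.integral_sub c1 c2]
      rw [intervalIntegral.integral_const]
      rw [intervalIntegral.integral_const_mul]
      have hid : ∫ s in t..(t+w), (s - t) = w^2/2 := by
        rw [intervalIntegral.integral_comp_sub_right (fun x => x) t, integral_id]
        ring
      rw [hid]
      simp
      ring
    rw [hcalc] at this
    linarith
  have hLw : L * w / 2 ≤ ε / 4 := by
    have h1 : w ≤ ε / (2 * L) := min_le_right _ _
    have h2 : L * w ≤ L * (ε / (2 * L)) := mul_le_mul_of_nonneg_left h1 hL.le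
    have h3 : L * (ε / (2 * L)) = ε / 2 := by field_simp
    linarith
  have : w * |r t| < w * ε / 4 + L * w^2 / 2 := by linarith
  have h2 : w * |r t| < w * ε / 4 + w * (ε/4) := by
    have : L * w^2 / 2 = (L * w / 2) * w := by ring
    nlinarith
  have h3 : |r t| < ε / 2 := by
    have := (mul_lt_mul_iff_right₀ hw0).mp (by linarith [h2] : w * |r t| < w * (ε/2))
    exact this
  calc ‖r t‖ = |r t| := rfl
    _ < ε := by linarith

lemma comp_sub_id (k φ : ℝ → ℝ) (t : ℝ) :
    ∫ s in (0:ℝ)..t, k (t - s) * φ s = ∫ u in (0:ℝ)..t, k u * φ (t - u) := by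
  have h := intervalIntegral.integral_comp_sub_left (a := (0:ℝ)) (b := t)
    (fun u => k u * φ (t - u)) t
  simp only [sub_sub_cancel, sub_zero, sub_self] at h
  exact h

lemma conv_tendsto (k φ : ℝ → ℝ) (hk : IntegrableOn k (Set.Ioi (0:ℝ)))
    (hφc : Continuous φ) (M : ℝ) (hM : ∀ s, 0 ≤ s → |φ s| ≤ M)
    (hφ0 : Tendsto φ atTop (nhds 0)) :
    Tendsto (fun t => ∫ s in (0:ℝ)..t, k (t - s) * φ s) atTop (nhds 0) := by
  classical
  set φh : ℝ → ℝ := fun x => if 0 ≤ x then φ x else 0 with hφh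
  have hφhm : Measurable φh := Measurable.ite measurableSet_Ici hφc.measurable measurable_const
  have hφhb : ∀ x, |φh x| ≤ M := by
    intro x
    by_cases h : (0:ℝ) ≤ x
    · simp only [hφh, if_pos h]; exact hM x h
    · simp only [hφh, if_neg h, abs_zero]
      exact le_trans (abs_nonneg (φ 0)) (hM 0 le_rfl)
  have hM0 : 0 ≤ M := le_trans (abs_nonneg _) (hM 0 le_rfl)
  set μ := volume.restrict (Set.Ioi (0:ℝ)) with hμ
  have hmeas : ∀ t : ℝ, AEStronglyMeasurable (fun u => k u * φh (t - u)) μ := by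
    intro t
    exact hk.aestronglyMeasurable.mul
      ((hφhm.comp (measurable_const.sub measurable_id)).aestronglyMeasurable)
  have hbound : ∀ t : ℝ, ∀ᵐ u ∂μ, ‖k u * φh (t - u)‖ ≤ M * |k u| := by
    intro t
    apply Filter.Eventually.of_forall
    intro u
    rw [norm_mul]
    calc ‖k u‖ * ‖φh (t-u)‖ ≤ ‖k u‖ * M := by
          apply mul_le_mul_of_nonneg_left (hφhb _) (norm_nonneg _)
      _ = M * |k u| := by rw [mul_comm]; rfl
  have hbi : Integrable (fun u => M * |k u|) μ := (hk.norm.const_mul M)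
  have hlim : ∀ᵐ u ∂μ, Tendsto (fun t => k u * φh (t - u)) atTop (nhds 0) := by
    apply Filter.Eventually.of_forall
    intro u
    have h1 : Tendsto (fun t => φh (t - u)) atTop (nhds 0) := by
      have h2 : Tendsto (fun t : ℝ => t - u) atTop atTop :=
        tendsto_atTop_add_const_right _ (-u) tendsto_id
      have h3 : Tendsto φh atTop (nhds 0) := by
        apply hφ0.congr'
        filter_upwards [eventually_ge_atTop (0:ℝ)] with x hx
        simp [hφh, if_pos hx]
      exact h3.comp h2
    have := h1.const_mul (k u)
    simpa using this
  have hDCT := MeasureTheory.tendsto_integral_filter_of_dominated_convergence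
    (μ := μ) (F := fun (t : ℝ) u => k u * φh (t - u)) (f := fun _ => (0:ℝ))
    (fun u => M * |k u|)
    (Filter.Eventually.of_forall hmeas) (Filter.Eventually.of_forall hbound) hbi hlim
  rw [MeasureTheory.integral_zero] at hDCT
  apply hDCT.congr'
  filter_upwards [eventually_ge_atTop (0:ℝ)] with t ht
  have hsplit : Set.Ioi (0:ℝ) = Set.Ioc 0 t ∪ Set.Ioi t := (Set.Ioc_union_Ioi_eq_Ioi ht).symm
  have hint : Integrable (fun u => k u * φh (t - u)) μ :=
    Integrable.mono' hbi (hmeas t) (hbound t)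
  have hIntOn : IntegrableOn (fun u => k u * φh (t - u)) (Set.Ioi 0) volume := hint
  have h1 : ∫ u, k u * φh (t - u) ∂μ
      = (∫ u in Set.Ioc 0 t, k u * φh (t - u)) + ∫ u in Set.Ioi t, k u * φh (t - u) := by
    calc ∫ u, k u * φh (t - u) ∂μ = ∫ u in Set.Ioi (0:ℝ), k u * φh (t - u) := rfl
      _ = ∫ u in Set.Ioc 0 t ∪ Set.Ioi t, k u * φh (t - u) := by rw [← hsplit]
      _ = _ := MeasureTheory.setIntegral_union (Set.Ioc_disjoint_Ioi le_rfl)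
          measurableSet_Ioi (hIntOn.mono_set Set.Ioc_subset_Ioi_self)
          (hIntOn.mono_set (fun x hx => lt_of_le_of_lt ht hx))
  have h2 : ∫ u in Set.Ioi t, k u * φh (t - u) = 0 := by
    apply MeasureTheory.setIntegral_eq_zero_of_forall_eq_zero
    intro u hu
    have : t - u < 0 := by simp at hu; linarith
    simp [hφh, if_neg (not_le.mpr this)]
  have h3 : ∫ u in Set.Ioc 0 t, k u * φh (t - u) = ∫ u in Set.Ioc 0 t, k u * φ (t - u) := by
    apply MeasureTheory.setIntegral_congr_fun measurableSet_Ioc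
    intro u hu
    have : (0:ℝ) ≤ t - u := by simp at hu ⊢; linarith [hu.2]
    simp [hφh, if_pos this]
  rw [comp_sub_id k φ t, intervalIntegral.integral_of_le ht]
  rw [h1, h2, h3, add_zero]

theorem forced_solution_tendsto_zero_of_avg
    (τ : ℝ) (hτ : 0 < τ) (ν : MeasureTheory.SignedMeasure ℝ)
    (hν : ν.totalVariation (Set.Icc (-τ) 0)ᶜ = 0)
    (r : ℝ → ℝ) (hr : IsResolvent ν r)
    (hrL1 : IntegrableOn r (Set.Ioi (0:ℝ)))
    (f : ℝ → ℝ) (hf : ContinuousOn f (Set.Ici (0:ℝ)))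
    (havg : ∀ δ ∈ Set.Ioc (0:ℝ) 1,
      Tendsto (fun t => ∫ s in t..(t + δ), f s) atTop (nhds 0)) :
    Tendsto (fun t => ∫ s in (0:ℝ)..t, r (t - s) * f s) atTop (nhds 0) := by
  classical
  obtain ⟨hr0, hrc, hre⟩ := hr
  set μp := ν.toJordanDecomposition.posPart with hμp
  set μn := ν.toJordanDecomposition.negPart with hμn
  -- measurability of r
  have hrmax : Continuous (fun x : ℝ => r (max x 0)) :=
    hrc.comp_continuous (continuous_id.max continuous_const) (fun x => le_max_right x 0)
  have hrm : Measurable r := by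
    have hrep : r = (Set.Ici (0:ℝ)).indicator (fun x => r (max x 0)) := by
      funext x
      by_cases h : (0:ℝ) ≤ x
      · rw [Set.indicator_of_mem (Set.mem_Ici.mpr h), max_eq_left h]
      · rw [Set.indicator_of_notMem (by simpa using h), hr0 x (not_le.mp h)]
    rw [hrep]
    exact hrmax.measurable.indicator measurableSet_Ici
  set K : ℝ → ℝ := fun s => sInt ν (fun u => r (s + u)) with hKdef
  have hKeq : ∀ s, K s = (∫ u, r (s + u) ∂μp) - ∫ u, r (s + u) ∂μn := fun s => rfl
  -- measurability of K
  have hprod : StronglyMeasurable (fun p : ℝ × ℝ => r (p.1 + p.2)) :=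
    (hrm.comp measurable_add).stronglyMeasurable
  have hKm : Measurable K := by
    have h1 := hprod.integral_prod_right' (ν := μp)
    have h2 := hprod.integral_prod_right' (ν := μn)
    exact (h1.sub h2).measurable
  -- finiteness of ∫⁻ ‖r‖
  set RI : ENNReal := ∫⁻ x, (‖r x‖₊ : ENNReal) ∂volume with hRIdef
  have hRI : RI < ⊤ := by
    rw [hRIdef, ← MeasureTheory.lintegral_add_compl (fun x => (‖r x‖₊ : ENNReal))
      (measurableSet_Ici (a := (0:ℝ)))]
    have h1 : ∫⁻ x in (Set.Ici (0:ℝ))ᶜ, (‖r x‖₊ : ENNReal) ∂volume = 0 := by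
      rw [Set.compl_Ici]
      have he : ∫⁻ x in Set.Iio (0:ℝ), (‖r x‖₊ : ENNReal) ∂volume
          = ∫⁻ x in Set.Iio (0:ℝ), 0 ∂volume :=
        MeasureTheory.setLIntegral_congr_fun measurableSet_Iio
          (fun x hx => by simp [hr0 x hx])
      rw [he]
      simp
    have h2 : ∫⁻ x in Set.Ici (0:ℝ), (‖r x‖₊ : ENNReal) ∂volume < ⊤ := by
      rw [← MeasureTheory.restrict_Ioi_eq_restrict_Ici]
      exact hrL1.2
    rw [h1, add_zero]
    exact h2
  have htrans : ∀ u : ℝ, ∫⁻ s in Set.Ioi (0:ℝ), (‖r (s + u)‖₊ : ENNReal) ∂volume ≤ RI := by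
    intro u
    calc ∫⁻ s in Set.Ioi (0:ℝ), (‖r (s + u)‖₊ : ENNReal) ∂volume
        ≤ ∫⁻ s, (‖r (s + u)‖₊ : ENNReal) ∂volume :=
          MeasureTheory.setLIntegral_le_lintegral _ _
      _ = RI := MeasureTheory.lintegral_add_right_eq_self (fun x => (‖r x‖₊ : ENNReal)) u
  -- integrability of K on Ioi 0
  have hKint : IntegrableOn K (Set.Ioi (0:ℝ)) := by
    refine ⟨(hKm.aestronglyMeasurable), ?_⟩
    have hb : ∀ s, (‖K s‖₊ : ENNReal) ≤ (∫⁻ u, (‖r (s + u)‖₊ : ENNReal) ∂μp)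
        + ∫⁻ u, (‖r (s + u)‖₊ : ENNReal) ∂μn := by
      intro s
      rw [hKeq s]
      calc (‖(∫ u, r (s + u) ∂μp) - ∫ u, r (s + u) ∂μn‖₊ : ENNReal)
          ≤ (‖∫ u, r (s + u) ∂μp‖₊ : ENNReal) + (‖∫ u, r (s + u) ∂μn‖₊ : ENNReal) := by
            exact_mod_cast ENNReal.coe_le_coe.mpr (nnnorm_sub_le _ _)
        _ ≤ _ := add_le_add (MeasureTheory.enorm_integral_le_lintegral_enorm _)
            (MeasureTheory.enorm_integral_le_lintegral_enorm _)
    have hmp : Measurable (fun p : ℝ × ℝ => (‖r (p.1 + p.2)‖₊ : ENNReal)) :=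
      (hrm.comp measurable_add).enorm
    have hswap1 : ∫⁻ s in Set.Ioi (0:ℝ), (∫⁻ u, (‖r (s + u)‖₊ : ENNReal) ∂μp) ∂volume
        ≤ RI * μp Set.univ := by
      rw [MeasureTheory.lintegral_lintegral_swap (hmp.aemeasurable)]
      calc ∫⁻ u, (∫⁻ s in Set.Ioi (0:ℝ), (‖r (s + u)‖₊ : ENNReal) ∂volume) ∂μp
          ≤ ∫⁻ _ , RI ∂μp := MeasureTheory.lintegral_mono (fun u => htrans u)
        _ = RI * μp Set.univ := MeasureTheory.lintegral_const _
    have hswap2 : ∫⁻ s in Set.Ioi (0:ℝ), (∫⁻ u, (‖r (s + u)‖₊ : ENNReal) ∂μn) ∂volume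
        ≤ RI * μn Set.univ := by
      rw [MeasureTheory.lintegral_lintegral_swap (hmp.aemeasurable)]
      calc ∫⁻ u, (∫⁻ s in Set.Ioi (0:ℝ), (‖r (s + u)‖₊ : ENNReal) ∂volume) ∂μn
          ≤ ∫⁻ _ , RI ∂μn := MeasureTheory.lintegral_mono (fun u => htrans u)
        _ = RI * μn Set.univ := MeasureTheory.lintegral_const _
    have hmono : ∫⁻ s in Set.Ioi (0:ℝ), (‖K s‖₊ : ENNReal) ∂volume
        ≤ RI * μp Set.univ + RI * μn Set.univ := by
      calc ∫⁻ s in Set.Ioi (0:ℝ), (‖K s‖₊ : ENNReal) ∂volume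
          ≤ ∫⁻ s in Set.Ioi (0:ℝ), ((∫⁻ u, (‖r (s + u)‖₊ : ENNReal) ∂μp)
              + ∫⁻ u, (‖r (s + u)‖₊ : ENNReal) ∂μn) ∂volume :=
            MeasureTheory.lintegral_mono (fun s => hb s)
        _ = (∫⁻ s in Set.Ioi (0:ℝ), (∫⁻ u, (‖r (s + u)‖₊ : ENNReal) ∂μp) ∂volume)
              + ∫⁻ s in Set.Ioi (0:ℝ), (∫⁻ u, (‖r (s + u)‖₊ : ENNReal) ∂μn) ∂volume := by
            apply MeasureTheory.lintegral_add_left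
            exact hmp.lintegral_prod_right'
        _ ≤ _ := add_le_add hswap1 hswap2
    refine lt_of_le_of_lt hmono ?_
    have h1 : RI * μp Set.univ < ⊤ := ENNReal.mul_lt_top hRI (measure_lt_top μp _)
    have h2 : RI * μn Set.univ < ⊤ := ENNReal.mul_lt_top hRI (measure_lt_top μn _)
    exact ENNReal.add_lt_top.mpr ⟨h1, h2⟩
  -- interval integrability of K
  have hKii : ∀ t : ℝ, 0 ≤ t → IntervalIntegrable K volume 0 t := by
    intro t ht
    rw [intervalIntegrable_iff_integrableOn_Ioc_of_le ht]
    exact hKint.mono_set Set.Ioc_subset_Ioi_self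
  -- global bound on r
  set Bint : ℝ := ∫ s in Set.Ioi (0:ℝ), |K s| with hBintdef
  have hBint0 : 0 ≤ Bint :=
    MeasureTheory.setIntegral_nonneg measurableSet_Ioi (fun _ _ => abs_nonneg _)
  set B : ℝ := 1 + Bint with hBdef
  have hB1 : (1:ℝ) ≤ B := by simp [hBdef]; linarith
  have hrB : ∀ x, |r x| ≤ B := by
    intro x
    rcases lt_or_ge x 0 with h | h
    · rw [hr0 x h]; simp; linarith
    · rw [hre x h]
      have h1 : ‖∫ s in (0:ℝ)..x, K s‖ ≤ |∫ s in (0:ℝ)..x, ‖K s‖| :=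
        intervalIntegral.norm_integral_le_abs_integral_norm
      have h2 : ∫ s in (0:ℝ)..x, ‖K s‖ ≤ Bint := by
        rw [intervalIntegral.integral_of_le h]
        apply MeasureTheory.setIntegral_mono_set hKint.norm
          (Filter.Eventually.of_forall (fun s => norm_nonneg _))
          (Filter.Eventually.of_forall (fun s hs => Set.Ioc_subset_Ioi_self hs))
      have h3 : 0 ≤ ∫ s in (0:ℝ)..x, ‖K s‖ := by
        rw [intervalIntegral.integral_of_le h]
        exact MeasureTheory.setIntegral_nonneg measurableSet_Ioc (fun _ _ => norm_nonneg _)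
      have h4 : |∫ s in (0:ℝ)..x, K s| ≤ Bint := by
        rw [abs_of_nonneg h3] at h1
        exact le_trans h1 h2
      calc |1 + ∫ s in (0:ℝ)..x, K s| ≤ |(1:ℝ)| + |∫ s in (0:ℝ)..x, K s| := abs_add_le _ _
        _ ≤ 1 + Bint := by rw [abs_one]; linarith
        _ = B := rfl
  -- global bound on K
  set L : ℝ := B * (μp Set.univ).toReal + B * (μn Set.univ).toReal + 1 with hLdef
  have hL0 : 0 < L := by
    have := ENNReal.toReal_nonneg (a := μp Set.univ)
    have := ENNReal.toReal_nonneg (a := μn Set.univ)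
    nlinarith
  have hKbd : ∀ s, |K s| ≤ L := by
    intro s
    rw [hKeq s]
    have h1 : ‖∫ u, r (s + u) ∂μp‖ ≤ B * (μp Set.univ).toReal :=
      MeasureTheory.norm_integral_le_of_norm_le_const
        (Filter.Eventually.of_forall (fun u => hrB (s + u)))
    have h2 : ‖∫ u, r (s + u) ∂μn‖ ≤ B * (μn Set.univ).toReal :=
      MeasureTheory.norm_integral_le_of_norm_le_const
        (Filter.Eventually.of_forall (fun u => hrB (s + u)))
    calc |(∫ u, r (s + u) ∂μp) - ∫ u, r (s + u) ∂μn|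
        ≤ ‖∫ u, r (s + u) ∂μp‖ + ‖∫ u, r (s + u) ∂μn‖ := abs_sub _ _
      _ ≤ L := by rw [hLdef]; linarith
  have hKiiall : ∀ a b : ℝ, IntervalIntegrable K volume a b := by
    intro a b
    rw [intervalIntegrable_iff]
    refine Integrable.mono' (g := fun _ => L)
      ((MeasureTheory.integrableOn_const_iff).mpr (Or.inr measure_Ioc_lt_top))
      hKm.aestronglyMeasurable (Filter.Eventually.of_forall (fun x => hKbd x))
  -- difference identity and Lipschitz property
  have hrdiff : ∀ a b : ℝ, 0 ≤ a → a ≤ b → r b - r a = ∫ s in a..b, K s := by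
    intro a b ha hab
    rw [hre b (le_trans ha hab), hre a ha]
    have := intervalIntegral.integral_interval_sub_left (hKii b (le_trans ha hab)) (hKii a ha)
    linarith [this]
  have hlip : ∀ a b : ℝ, 0 ≤ a → a ≤ b → |r b - r a| ≤ L * (b - a) := by
    intro a b ha hab
    rw [hrdiff a b ha hab]
    have h1 : ‖∫ s in a..b, K s‖ ≤ L * |b - a| :=
      intervalIntegral.norm_integral_le_of_norm_le_const (fun x _ => hKbd x)
    rwa [abs_of_nonneg (by linarith : (0:ℝ) ≤ b - a)] at h1
  have hrten : Tendsto r atTop (nhds 0) := tendsto_zero_of_L1_lip r L hL0 hrL1 hlip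
  -- the forcing function machinery
  set g : ℝ → ℝ := fun s => f (max s 0) with hgdef
  have hgc : Continuous g :=
    hf.comp_continuous (continuous_id.max continuous_const) (fun x => le_max_right x 0)
  set F : ℝ → ℝ := fun s => ∫ x in (0:ℝ)..s, g x with hFdef
  have hFd : ∀ s, HasDerivAt F (g s) s := fun s => (hgc.integral_hasStrictDerivAt 0 s).hasDerivAt
  have hFc : Continuous F := continuous_iff_continuousAt.mpr fun s => (hFd s).continuousAt
  have hG : ∀ δ ∈ Set.Ioc (0:ℝ) 1, Tendsto (fun t => F (t + δ) - F t) atTop (nhds 0) := by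
    intro δ hδ
    apply (havg δ hδ).congr'
    filter_upwards [eventually_ge_atTop (0:ℝ)] with t ht
    have h1 : F (t + δ) - F t = ∫ s in t..(t + δ), g s :=
      intervalIntegral.integral_interval_sub_left
        (hgc.intervalIntegrable _ _) (hgc.intervalIntegrable _ _)
    have h2 : ∫ s in t..(t + δ), g s = ∫ s in t..(t + δ), f s := by
      apply intervalIntegral.integral_congr
      intro s hs
      rw [Set.uIcc_of_le (by linarith [hδ.1] : t ≤ t + δ)] at hs
      show f (max s 0) = f s
      rw [max_eq_left (le_trans ht hs.1)]
    rw [h1, h2]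
  obtain ⟨C, hC0, hCb⟩ := unif_bound F hFc hG
  set g₁ : ℝ → ℝ := fun s => F (s + 1) - F s with hg₁def
  have hg₁c : Continuous g₁ := (hFc.comp (continuous_id.add continuous_const)).sub hFc
  have hg₁b : ∀ s, 0 ≤ s → |g₁ s| ≤ C := fun s hs => hCb s hs 1 ⟨zero_le_one, le_rfl⟩
  have hg₁0 : Tendsto g₁ atTop (nhds 0) := hG 1 ⟨one_pos, le_rfl⟩
  set H : ℝ → ℝ := fun s => ∫ v in (0:ℝ)..1, (F (s + v) - F s) with hHdef
  set Φ : ℝ → ℝ := fun u => ∫ x in (0:ℝ)..u, F x with hΦdef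
  have hΦd : ∀ u, HasDerivAt Φ (F u) u := fun u => (hFc.integral_hasStrictDerivAt 0 u).hasDerivAt
  have hHeq : ∀ s, H s = Φ (s + 1) - Φ s - F s := by
    intro s
    have h1 : H s = (∫ v in (0:ℝ)..1, F (s + v)) - ∫ v in (0:ℝ)..1, (F s : ℝ) :=
      intervalIntegral.integral_sub
        ((hFc.comp (continuous_const.add continuous_id)).intervalIntegrable _ _)
        (intervalIntegrable_const)
    have h2 : ∫ v in (0:ℝ)..1, F (s + v) = ∫ x in s..(s+1), F x := by
      have := intervalIntegral.integral_comp_add_left (a := (0:ℝ)) (b := 1) F s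
      simpa using this
    have h3 : ∫ x in s..(s+1), F x = Φ (s + 1) - Φ s := by
      have := intervalIntegral.integral_interval_sub_left (μ := volume) (a := (0:ℝ))
        (b := s + 1) (c := s) (f := F) (hFc.intervalIntegrable _ _) (hFc.intervalIntegrable _ _)
      rw [hΦdef]
      exact this.symm
    have h4 : ∫ v in (0:ℝ)..1, (F s : ℝ) = F s := by simp
    rw [h1, h2, h3, h4]
  set q : ℝ → ℝ := fun s => g₁ s - g s with hqdef
  have hqc : Continuous q := hg₁c.sub hgc
  have hHd : ∀ s, HasDerivAt H (q s) s := by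
    intro s
    have hfun : H = fun s => Φ (s + 1) - Φ s - F s := funext hHeq
    rw [hfun]
    have h1 : HasDerivAt (fun s : ℝ => Φ (s + 1)) (F (s + 1)) s := by
      have h2 := (hΦd (s + 1)).comp s ((hasDerivAt_id s).add_const 1)
      simp only [mul_one] at h2
      exact h2
    have := (h1.sub (hΦd s)).sub (hFd s)
    exact this
  have hHc : Continuous H := continuous_iff_continuousAt.mpr fun s => (hHd s).continuousAt
  have hHb : ∀ s, 0 ≤ s → |H s| ≤ C := by
    intro s hs
    have h1 : ‖∫ v in (0:ℝ)..1, (F (s + v) - F s)‖ ≤ C * |1 - 0| := by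
      apply intervalIntegral.norm_integral_le_of_norm_le_const
      intro v hv
      rw [Set.uIoc_of_le (zero_le_one)] at hv
      exact hCb s hs v ⟨hv.1.le, hv.2⟩
    simpa using h1
  have hH0 : Tendsto H atTop (nhds 0) := by
    have hDCT := MeasureTheory.tendsto_integral_filter_of_dominated_convergence
      (μ := volume.restrict (Set.Ioc (0:ℝ) 1)) (l := atTop)
      (F := fun (t : ℝ) v => F (t + v) - F t) (f := fun _ => (0:ℝ)) (fun _ => C)
      (Filter.Eventually.of_forall (fun t =>
        (((hFc.comp (continuous_const.add continuous_id)).sub continuous_const)).aestronglyMeasurable))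
      ?_ ?_ ?_
    · rw [MeasureTheory.integral_zero] at hDCT
      apply hDCT.congr'
      filter_upwards [eventually_ge_atTop (0:ℝ)] with t ht
      exact (intervalIntegral.integral_of_le zero_le_one).symm
    · filter_upwards [eventually_ge_atTop (0:ℝ)] with t ht
      filter_upwards [MeasureTheory.ae_restrict_mem measurableSet_Ioc] with v hv
      exact hCb t ht v ⟨hv.1.le, hv.2⟩
    · exact (MeasureTheory.integrableOn_const_iff).mpr (Or.inr measure_Ioc_lt_top)
    · filter_upwards [MeasureTheory.ae_restrict_mem measurableSet_Ioc] with v hv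
      exact hG v hv
  -- tendsto of the pieces
  have hA : Tendsto (fun t => ∫ s in (0:ℝ)..t, r (t - s) * g₁ s) atTop (nhds 0) :=
    conv_tendsto r g₁ hrL1 hg₁c C hg₁b hg₁0
  have hDc : Tendsto (fun t => ∫ s in (0:ℝ)..t, K (t - s) * H s) atTop (nhds 0) :=
    conv_tendsto K H hKint hHc C hHb hH0
  have hD : Tendsto (fun t => ∫ w in (0:ℝ)..t, K w * H (t - w)) atTop (nhds 0) :=
    hDc.congr (fun t => comp_sub_id K H t)
  -- FTC for q
  have hqii : ∀ u : ℝ, IntervalIntegrable q volume 0 u := fun u => hqc.intervalIntegrable _ _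
  have hqint : ∀ u : ℝ, ∫ s in (0:ℝ)..u, q s = H u - H 0 := fun u =>
    intervalIntegral.integral_eq_sub_of_hasDerivAt (fun x _ => hHd x) (hqii u)
  -- the key identity
  have key : ∀ t : ℝ, 0 ≤ t → ∫ s in (0:ℝ)..t, r (t - s) * f s
      = (∫ s in (0:ℝ)..t, r (t - s) * g₁ s)
        - (H t - H 0 * r t + ∫ w in (0:ℝ)..t, K w * H (t - w)) := by
    intro t ht
    have hmapsto : ∀ s ∈ Set.uIcc (0:ℝ) t, t - s ∈ Set.Ici (0:ℝ) := by
      intro s hs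
      rw [Set.uIcc_of_le ht] at hs
      exact sub_nonneg.mpr hs.2
    have hrts : ContinuousOn (fun s => r (t - s)) (Set.uIcc (0:ℝ) t) :=
      hrc.comp ((continuous_const.sub continuous_id).continuousOn) hmapsto
    have i1 : IntervalIntegrable (fun s => r (t - s) * g₁ s) volume 0 t :=
      (hrts.mul hg₁c.continuousOn).intervalIntegrable
    have i2 : IntervalIntegrable (fun s => r (t - s) * q s) volume 0 t :=
      (hrts.mul hqc.continuousOn).intervalIntegrable
    have e1 : ∫ s in (0:ℝ)..t, r (t - s) * f s = ∫ s in (0:ℝ)..t, r (t - s) * g s := by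
      apply intervalIntegral.integral_congr
      intro s hs
      rw [Set.uIcc_of_le ht] at hs
      show r (t - s) * f s = r (t - s) * f (max s 0)
      rw [max_eq_left hs.1]
    have e2 : ∫ s in (0:ℝ)..t, r (t - s) * g s
        = (∫ s in (0:ℝ)..t, r (t - s) * g₁ s) - ∫ s in (0:ℝ)..t, r (t - s) * q s := by
      rw [← intervalIntegral.integral_sub i1 i2]
      apply intervalIntegral.integral_congr
      intro s hs
      show r (t - s) * f (max s 0) = r (t - s) * g₁ s - r (t - s) * q s
      have hq1 : q s = g₁ s - f (max s 0) := rfl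
      rw [hq1]; ring
    have hPc : Continuous (fun s : ℝ => ∫ w in (0:ℝ)..(t - s), K w) :=
      (intervalIntegral.continuous_primitive hKiiall 0).comp (continuous_const.sub continuous_id)
    have i3 : IntervalIntegrable (fun s => (∫ w in (0:ℝ)..(t - s), K w) * q s) volume 0 t :=
      (hPc.mul hqc).intervalIntegrable _ _
    have e3 : ∫ s in (0:ℝ)..t, r (t - s) * q s
        = (∫ s in (0:ℝ)..t, q s) + ∫ s in (0:ℝ)..t, (∫ w in (0:ℝ)..(t - s), K w) * q s := by
      rw [← intervalIntegral.integral_add (hqii t) i3]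
      apply intervalIntegral.integral_congr
      intro s hs
      rw [Set.uIcc_of_le ht] at hs
      show r (t - s) * q s = q s + (∫ w in (0:ℝ)..(t - s), K w) * q s
      rw [hre (t - s) (sub_nonneg.mpr hs.2)]
      ring
    -- Fubini step
    have e4 : ∫ s in (0:ℝ)..t, (∫ w in (0:ℝ)..(t - s), K w) * q s
        = ∫ w in (0:ℝ)..t, K w * (H (t - w) - H 0) := by
      set μ1 := volume.restrict (Set.Ioi (0:ℝ)) with hμ1
      obtain ⟨Mq, hMq⟩ := (isCompact_Icc (a := (0:ℝ)) (b := t)).exists_bound_of_continuousOn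
        hqc.continuousOn
      set u2 : ℝ → ℝ → ℝ :=
        fun s w => if 0 < s ∧ 0 < w ∧ s + w ≤ t then K w * q s else 0 with hu2def
      have hset : MeasurableSet {p : ℝ × ℝ | 0 < p.1 ∧ 0 < p.2 ∧ p.1 + p.2 ≤ t} := by
        have h1 : {p : ℝ × ℝ | 0 < p.1 ∧ 0 < p.2 ∧ p.1 + p.2 ≤ t}
            = {p : ℝ × ℝ | 0 < p.1} ∩ ({p : ℝ × ℝ | 0 < p.2} ∩ {p : ℝ × ℝ | p.1 + p.2 ≤ t}) :=
          rfl
        rw [h1]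
        exact (measurableSet_lt measurable_const measurable_fst).inter
          ((measurableSet_lt measurable_const measurable_snd).inter
            (measurableSet_le (measurable_fst.add measurable_snd) measurable_const))
      have hu2m : Measurable (Function.uncurry u2) := by
        show Measurable fun p : ℝ × ℝ => if 0 < p.1 ∧ 0 < p.2 ∧ p.1 + p.2 ≤ t
          then K p.2 * q p.1 else 0
        exact Measurable.ite hset
          ((hKm.comp measurable_snd).mul (hqc.measurable.comp measurable_fst)) measurable_const
      have hu2int : Integrable (Function.uncurry u2) (μ1.prod μ1) := by
        refine Integrable.mono'
          (g := fun p : ℝ × ℝ => (Set.Ioc (0:ℝ) t ×ˢ Set.Ioc (0:ℝ) t).indicator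
            (fun _ => L * (Mq + 1)) p) ?_ hu2m.aestronglyMeasurable
          (Filter.Eventually.of_forall ?_)
        · rw [MeasureTheory.integrable_indicator_iff (measurableSet_Ioc.prod measurableSet_Ioc)]
          apply (MeasureTheory.integrableOn_const_iff).mpr (Or.inr ?_)
          rw [MeasureTheory.Measure.prod_prod]
          have hle : μ1 (Set.Ioc (0:ℝ) t) < ⊤ := by
            rw [hμ1, MeasureTheory.Measure.restrict_apply measurableSet_Ioc]
            exact lt_of_le_of_lt (measure_mono Set.inter_subset_left) measure_Ioc_lt_top
          exact ENNReal.mul_lt_top hle hle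
        · intro p
          show ‖Function.uncurry u2 p‖
            ≤ (Set.Ioc (0:ℝ) t ×ˢ Set.Ioc (0:ℝ) t).indicator (fun _ => L * (Mq + 1)) p
          by_cases hp : 0 < p.1 ∧ 0 < p.2 ∧ p.1 + p.2 ≤ t
          · have hval : Function.uncurry u2 p = K p.2 * q p.1 := if_pos hp
            rw [hval]
            have hmem : p ∈ Set.Ioc (0:ℝ) t ×ˢ Set.Ioc (0:ℝ) t :=
              ⟨⟨hp.1, by linarith [hp.2.1, hp.2.2]⟩, ⟨hp.2.1, by linarith [hp.1, hp.2.2]⟩⟩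
            rw [Set.indicator_of_mem hmem]
            have h1 : ‖q p.1‖ ≤ Mq + 1 := by
              have := hMq p.1 ⟨hp.1.le, by linarith [hp.2.1, hp.2.2]⟩
              linarith
            calc ‖K p.2 * q p.1‖ = ‖K p.2‖ * ‖q p.1‖ := norm_mul _ _
              _ ≤ L * (Mq + 1) := by
                  apply mul_le_mul (hKbd p.2) h1 (norm_nonneg _) hL0.le
          · have hval : Function.uncurry u2 p = 0 := if_neg hp
            rw [hval, norm_zero]
            apply Set.indicator_nonneg
            intro x _
            have hMq0 : 0 ≤ Mq := le_trans (norm_nonneg (q 0)) (hMq 0 ⟨le_rfl, ht⟩)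
            positivity
      have hswap := MeasureTheory.integral_integral_swap hu2int
      have hres : ∀ φ : ℝ → ℝ, ∫ x, (Set.Ioc (0:ℝ) t).indicator φ x ∂μ1
          = ∫ x in (0:ℝ)..t, φ x := by
        intro φ
        rw [MeasureTheory.integral_indicator measurableSet_Ioc, hμ1,
          MeasureTheory.Measure.restrict_restrict measurableSet_Ioc,
          Set.inter_eq_self_of_subset_left Set.Ioc_subset_Ioi_self,
          intervalIntegral.integral_of_le ht]
      have inner_s : ∀ s : ℝ, ∫ w, u2 s w ∂μ1
          = (Set.Ioc (0:ℝ) t).indicator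
              (fun s' => (∫ w in (0:ℝ)..(t - s'), K w) * q s') s := by
        intro s
        by_cases hs : s ∈ Set.Ioc (0:ℝ) t
        · rw [Set.indicator_of_mem hs]
          have hfun : (fun w => u2 s w)
              = (Set.Ioc (0:ℝ) (t - s)).indicator (fun w => K w * q s) := by
            funext w
            by_cases hw : w ∈ Set.Ioc (0:ℝ) (t - s)
            · rw [Set.indicator_of_mem hw]
              exact if_pos ⟨hs.1, hw.1, by linarith [hw.2]⟩
            · rw [Set.indicator_of_notMem hw]
              apply if_neg
              intro hcond
              exact hw ⟨hcond.2.1, by linarith [hcond.2.2]⟩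
          rw [hfun, MeasureTheory.integral_indicator measurableSet_Ioc, hμ1,
            MeasureTheory.Measure.restrict_restrict measurableSet_Ioc,
            Set.inter_eq_self_of_subset_left Set.Ioc_subset_Ioi_self,
            ← intervalIntegral.integral_of_le (by linarith [hs.2] : (0:ℝ) ≤ t - s)]
          exact intervalIntegral.integral_mul_const _ _
        · rw [Set.indicator_of_notMem hs]
          have hfun : (fun w => u2 s w) = fun _ => (0:ℝ) := by
            funext w
            apply if_neg
            intro hcond
            exact hs ⟨hcond.1, by linarith [hcond.2.1, hcond.2.2]⟩
          rw [hfun, MeasureTheory.integral_zero]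
      have inner_w : ∀ w : ℝ, ∫ s, u2 s w ∂μ1
          = (Set.Ioc (0:ℝ) t).indicator
              (fun w' => K w' * (H (t - w') - H 0)) w := by
        intro w
        by_cases hw : w ∈ Set.Ioc (0:ℝ) t
        · rw [Set.indicator_of_mem hw]
          have hfun : (fun s => u2 s w)
              = (Set.Ioc (0:ℝ) (t - w)).indicator (fun s => K w * q s) := by
            funext s
            by_cases hs : s ∈ Set.Ioc (0:ℝ) (t - w)
            · rw [Set.indicator_of_mem hs]
              exact if_pos ⟨hs.1, hw.1, by linarith [hs.2]⟩
            · rw [Set.indicator_of_notMem hs]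
              apply if_neg
              intro hcond
              exact hs ⟨hcond.1, by linarith [hcond.2.2]⟩
          rw [hfun, MeasureTheory.integral_indicator measurableSet_Ioc, hμ1,
            MeasureTheory.Measure.restrict_restrict measurableSet_Ioc,
            Set.inter_eq_self_of_subset_left Set.Ioc_subset_Ioi_self,
            ← intervalIntegral.integral_of_le (by linarith [hw.2] : (0:ℝ) ≤ t - w),
            intervalIntegral.integral_const_mul, hqint (t - w)]
        · rw [Set.indicator_of_notMem hw]
          have hfun : (fun s => u2 s w) = fun _ => (0:ℝ) := by
            funext s
            apply if_neg
            intro hcond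
            exact hw ⟨hcond.2.1, by linarith [hcond.1, hcond.2.2]⟩
          rw [hfun, MeasureTheory.integral_zero]
      calc ∫ s in (0:ℝ)..t, (∫ w in (0:ℝ)..(t - s), K w) * q s
          = ∫ s, (Set.Ioc (0:ℝ) t).indicator
              (fun s' => (∫ w in (0:ℝ)..(t - s'), K w) * q s') s ∂μ1 := (hres _).symm
        _ = ∫ s, (∫ w, u2 s w ∂μ1) ∂μ1 :=
            MeasureTheory.integral_congr_ae
              (Filter.Eventually.of_forall (fun s => (inner_s s).symm))
        _ = ∫ w, (∫ s, u2 s w ∂μ1) ∂μ1 := hswap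
        _ = ∫ w, (Set.Ioc (0:ℝ) t).indicator
              (fun w' => K w' * (H (t - w') - H 0)) w ∂μ1 :=
            MeasureTheory.integral_congr_ae (Filter.Eventually.of_forall inner_w)
        _ = ∫ w in (0:ℝ)..t, K w * (H (t - w) - H 0) := hres _
    have e5 : ∫ w in (0:ℝ)..t, K w * (H (t - w) - H 0)
        = (∫ w in (0:ℝ)..t, K w * H (t - w)) - (r t - 1) * H 0 := by
      have i4 : IntervalIntegrable (fun w => K w * H (t - w)) volume 0 t :=
        (hKii t ht).mul_continuousOn
          ((hHc.comp (continuous_const.sub continuous_id)).continuousOn)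
      have i5 : IntervalIntegrable (fun w => K w * H 0) volume 0 t :=
        (hKii t ht).mul_continuousOn continuous_const.continuousOn
      have h2 : ∫ w in (0:ℝ)..t, (K w * H (t - w) - K w * H 0)
          = (∫ w in (0:ℝ)..t, K w * H (t - w)) - ∫ w in (0:ℝ)..t, K w * H 0 :=
        intervalIntegral.integral_sub i4 i5
      have h3 : ∫ w in (0:ℝ)..t, K w * H 0 = (∫ w in (0:ℝ)..t, K w) * H 0 :=
        intervalIntegral.integral_mul_const _ _
      have hr00 : r 0 = 1 := by
        rw [hre 0 le_rfl, intervalIntegral.integral_same]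
        norm_num
      have h4 : ∫ w in (0:ℝ)..t, K w = r t - 1 := by
        have := hrdiff 0 t le_rfl ht
        rw [hr00] at this
        linarith
      calc ∫ w in (0:ℝ)..t, K w * (H (t - w) - H 0)
          = ∫ w in (0:ℝ)..t, (K w * H (t - w) - K w * H 0) :=
            intervalIntegral.integral_congr (fun w _ => by ring)
        _ = (∫ w in (0:ℝ)..t, K w * H (t - w)) - ∫ w in (0:ℝ)..t, K w * H 0 := h2
        _ = _ := by rw [h3, h4]
    rw [e1, e2, e3, hqint t, e4, e5]
    ring
  -- final assembly
  have hcomb : Tendsto (fun t => (∫ s in (0:ℝ)..t, r (t - s) * g₁ s)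
      - (H t - H 0 * r t + ∫ w in (0:ℝ)..t, K w * H (t - w))) atTop (nhds 0) := by
    have h := hA.sub ((hH0.sub ((tendsto_const_nhds (x := H 0)).mul hrten)).add hD)
    simpa using h
  apply hcomb.congr'
  filter_upwards [eventually_ge_atTop (0:ℝ)] with t ht
  exact (key t ht).symm
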